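/- Let m ≥ 1 be an integer, let D ⊂ ℝ² ≅ ℂ be the open unit disk, and define n : D → ℝ³ by n(z) = (2 Re(zᵐ), 2 Im(zᵐ), 1 − |z|^{2m}) / (1 + |z|^{2m}) (the inverse stereographic lift of the holomorphic map w(z) = zᵐ). Then |n(z)| = 1 for all z ∈ D, n is conformal with ∂₂n = n × ∂₁n on D, and the Dirichlet energy of n equals ∫_D (|∂₁n|² + |∂₂n|²) dx = 4πm. -/

import Mathlib

open Matrix

/-- Partial derivative of a map `ℂ ≅ ℝ² → ℝ³` along the first coordinate direction. -/
noncomputable def pdz1 (f : ℂ → (Fin 3 → ℝ)) (z : ℂ) : Fin 3 → ℝ := fderiv ℝ f z 1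

/-- Partial derivative of a map `ℂ ≅ ℝ² → ℝ³` along the second coordinate direction. -/
noncomputable def pdz2 (f : ℂ → (Fin 3 → ℝ)) (z : ℂ) : Fin 3 → ℝ := fderiv ℝ f z Complex.I

/-- The inverse stereographic lift of the holomorphic map `w(z) = zᵐ`:
`n(z) = (2 Re(zᵐ), 2 Im(zᵐ), 1 - |z|^(2m)) / (1 + |z|^(2m))`. -/
noncomputable def nconf (m : ℕ) (z : ℂ) : Fin 3 → ℝ :=
  (1 + ‖z‖ ^ (2 * m))⁻¹ •
    ![2 * (z ^ m).re, 2 * (z ^ m).im, 1 - ‖z‖ ^ (2 * m)]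

open Complex MeasureTheory Set

set_option maxHeartbeats 1000000

lemma abs_pow_eq (m : ℕ) (z : ℂ) :
    ‖z‖ ^ (2*m) = (z^m).re*(z^m).re + (z^m).im*(z^m).im := by
  rw [mul_comm, pow_mul, ← norm_pow, Complex.sq_norm, Complex.normSq_apply]

noncomputable def lco (c : ℂ) (α β : ℝ) : ℂ →L[ℝ] ℝ :=
  (α • Complex.reCLM + β • Complex.imCLM).comp ((ContinuousLinearMap.mul ℝ ℂ) c)

@[simp] lemma lco_apply (c : ℂ) (α β : ℝ) (e : ℂ) :
    lco c α β e = α * (c*e).re + β * (c*e).im := by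
  simp [lco]

noncomputable def Ln (m : ℕ) (z : ℂ) : ℂ →L[ℝ] (Fin 3 → ℝ) :=
  ContinuousLinearMap.pi
    (letI u := (z^m).re; letI v := (z^m).im; letI s := u*u+v*v; letI c := (m : ℂ)*z^(m-1)
     ![lco c ((2*(1+s)-4*u^2)/(1+s)^2) ((-(4*u*v))/(1+s)^2),
       lco c ((-(4*u*v))/(1+s)^2) ((2*(1+s)-4*v^2)/(1+s)^2),
       lco c ((-(4*u))/(1+s)^2) ((-(4*v))/(1+s)^2)])

lemma clm_ext {L1 L2 : ℂ →L[ℝ] ℝ} (h1 : L1 1 = L2 1) (hI : L1 I = L2 I) : L1 = L2 := by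
  ext e
  have he : e = e.re • (1:ℂ) + e.im • I := by
    simp [Complex.real_smul, Complex.re_add_im]
  rw [he, map_add, map_add, _root_.map_smul, _root_.map_smul, _root_.map_smul, _root_.map_smul,
    h1, hI]

lemma hasFDerivAt_nconf (m : ℕ) (z : ℂ) : HasFDerivAt (nconf m) (Ln m z) z := by
  have hw : HasFDerivAt (fun z : ℂ => z^m)
      (((ContinuousLinearMap.smulRight (1 : ℂ →L[ℂ] ℂ) ((m:ℂ) * z^(m-1)))).restrictScalars ℝ) z :=
    ((hasDerivAt_pow m z).hasFDerivAt).restrictScalars ℝ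
  set Cm := ((ContinuousLinearMap.smulRight (1 : ℂ →L[ℂ] ℂ) ((m:ℂ) * z^(m-1)))).restrictScalars ℝ
    with hCm
  have hu : HasFDerivAt (fun z : ℂ => (z^m).re) (Complex.reCLM.comp Cm) z :=
    (Complex.reCLM.hasFDerivAt).comp z hw
  have hv : HasFDerivAt (fun z : ℂ => (z^m).im) (Complex.imCLM.comp Cm) z :=
    (Complex.imCLM.hasFDerivAt).comp z hw
  have hspos : (0:ℝ) < 1 + ((z^m).re*(z^m).re + (z^m).im*(z^m).im) := by
    nlinarith [mul_self_nonneg (z^m).re, mul_self_nonneg (z^m).im]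
  have hs : HasFDerivAt (fun z : ℂ => 1 + ((z^m).re*(z^m).re + (z^m).im*(z^m).im))
      _ z := (((hu.mul hu).add (hv.mul hv)).const_add 1)
  have hinv := ((hasDerivAt_inv hspos.ne').hasFDerivAt).comp z hs
  apply hasFDerivAt_pi''
  intro i
  fin_cases i
  · have e0 : (fun z : ℂ => nconf m z 0)
        = fun z => (1 + ((z^m).re*(z^m).re + (z^m).im*(z^m).im))⁻¹ * (2*(z^m).re) := by
      funext z; simp [nconf, abs_pow_eq]
    have h0 := hinv.mul (hu.const_mul 2)
    show HasFDerivAt (fun z : ℂ => nconf m z 0) _ z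
    rw [e0]
    refine h0.congr_fderiv ?_
    apply clm_ext <;>
    · simp [Ln, hCm]
      field_simp
      ring
  · have e1 : (fun z : ℂ => nconf m z 1)
        = fun z => (1 + ((z^m).re*(z^m).re + (z^m).im*(z^m).im))⁻¹ * (2*(z^m).im) := by
      funext z; simp [nconf, abs_pow_eq]
    have h1 := hinv.mul (hv.const_mul 2)
    show HasFDerivAt (fun z : ℂ => nconf m z 1) _ z
    rw [e1]
    refine h1.congr_fderiv ?_
    apply clm_ext <;>
    · simp [Ln, hCm]
      field_simp
      ring
  · have e2 : (fun z : ℂ => nconf m z 2)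
        = fun z => (1 + ((z^m).re*(z^m).re + (z^m).im*(z^m).im))⁻¹
            * (1 - ((z^m).re*(z^m).re + (z^m).im*(z^m).im)) := by
      funext z; simp [nconf, abs_pow_eq]
    have hq : HasFDerivAt
        (fun z : ℂ => 1 - ((z^m).re*(z^m).re + (z^m).im*(z^m).im)) _ z :=
      ((hu.mul hu).add (hv.mul hv)).const_sub 1
    have h2 := hinv.mul hq
    show HasFDerivAt (fun z : ℂ => nconf m z 2) _ z
    rw [e2]
    refine h2.congr_fderiv ?_
    apply clm_ext <;>
    · simp [Ln, hCm]
      field_simp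
      ring

lemma pdz1_eq (m : ℕ) (z : ℂ) : pdz1 (nconf m) z = Ln m z 1 := by
  rw [pdz1, (hasFDerivAt_nconf m z).fderiv]

lemma pdz2_eq (m : ℕ) (z : ℂ) : pdz2 (nconf m) z = Ln m z I := by
  rw [pdz2, (hasFDerivAt_nconf m z).fderiv]

lemma nconf_unit (m : ℕ) (z : ℂ) : nconf m z ⬝ᵥ nconf m z = 1 := by
  have h : (0:ℝ) < 1 + ‖z‖ ^ (2*m) := by positivity
  have hs := abs_pow_eq m z
  simp [nconf, dotProduct, Fin.sum_univ_three]
  field_simp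
  nlinarith [hs]

lemma nconf_conformal (m : ℕ) (z : ℂ) :
    pdz2 (nconf m) z = nconf m z ⨯₃ pdz1 (nconf m) z := by
  have h : (0:ℝ) < 1 + ((z^m).re*(z^m).re + (z^m).im*(z^m).im) := by
    nlinarith [mul_self_nonneg (z^m).re, mul_self_nonneg (z^m).im]
  rw [pdz1_eq, pdz2_eq]
  funext i
  fin_cases i <;>
  · simp [Ln, nconf, crossProduct, abs_pow_eq]
    field_simp
    ring

lemma density0 (m : ℕ) (z : ℂ) :
    pdz1 (nconf m) z ⬝ᵥ pdz1 (nconf m) z + pdz2 (nconf m) z ⬝ᵥ pdz2 (nconf m) z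
    = 8*(((m:ℂ)*z^(m-1)).re*((m:ℂ)*z^(m-1)).re + ((m:ℂ)*z^(m-1)).im*((m:ℂ)*z^(m-1)).im)
        /(1+‖z‖^(2*m))^2 := by
  have h : (0:ℝ) < 1 + ((z^m).re*(z^m).re + (z^m).im*(z^m).im) := by
    nlinarith [mul_self_nonneg (z^m).re, mul_self_nonneg (z^m).im]
  rw [pdz1_eq, pdz2_eq]
  simp [Ln, dotProduct, Fin.sum_univ_three, abs_pow_eq]
  set u := (z^m).re with hu
  set v := (z^m).im with hv
  set a := (m:ℝ) * (z^(m-1)).re with ha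
  set b := (m:ℝ) * (z^(m-1)).im with hb
  have h2 : ((1+(u*u+v*v):ℝ)^2) ≠ 0 := pow_ne_zero 2 h.ne'
  have key : ((((1+(u*u+v*v))^2:ℝ))⁻¹)^2 * (1+(u*u+v*v))^2 = ((1+(u*u+v*v))^2)⁻¹ := by
    rw [sq (((1+(u*u+v*v))^2:ℝ))⁻¹, mul_assoc, inv_mul_cancel₀ h2, mul_one]
  conv_rhs => rw [div_eq_mul_inv, ← key]
  ring

lemma density (m : ℕ) (z : ℂ) :
    pdz1 (nconf m) z ⬝ᵥ pdz1 (nconf m) z + pdz2 (nconf m) z ⬝ᵥ pdz2 (nconf m) z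
    = 8*(m:ℝ)^2*‖z‖^(2*m-2)/(1+‖z‖^(2*m))^2 := by
  rw [density0 m z]
  congr 1
  have h1 := abs_pow_eq (m-1) z
  have hre : ((m:ℂ)*z^(m-1)).re = (m:ℝ) * (z^(m-1)).re := by
    simp [Complex.mul_re]
  have him : ((m:ℂ)*z^(m-1)).im = (m:ℝ) * (z^(m-1)).im := by
    simp [Complex.mul_im]
  rw [hre, him, show 2*m-2 = 2*(m-1) by omega, h1]
  ring

lemma ftc_piece (m : ℕ) (hm : 1 ≤ m) :
    ∫ y in Ioo (0:ℝ) 1, y * (8*(m:ℝ)^2*y^(2*m-2)/(1+y^(2*m))^2) = 2*(m:ℝ) := by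
  have hcont : Continuous (fun y : ℝ => y * (8*(m:ℝ)^2*y^(2*m-2)/(1+y^(2*m))^2)) := by
    apply Continuous.mul continuous_id
    apply Continuous.div (by continuity) (by continuity)
    intro y
    have : (0:ℝ) < 1 + y^(2*m) := by
      have : (0:ℝ) ≤ y^(2*m) := by
        rw [mul_comm, pow_mul]; positivity
      linarith
    positivity
  have hderiv : ∀ y ∈ uIcc (0:ℝ) 1,
      HasDerivAt (fun y : ℝ => -(4*(m:ℝ))/(1+y^(2*m)))
        (y * (8*(m:ℝ)^2*y^(2*m-2)/(1+y^(2*m))^2)) y := by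
    intro y _
    have hpos : (0:ℝ) < 1 + y^(2*m) := by
      have : (0:ℝ) ≤ y^(2*m) := by rw [mul_comm, pow_mul]; positivity
      linarith
    have h1 : HasDerivAt (fun y : ℝ => 1 + y^(2*m)) ((2*m:ℕ)*y^(2*m-1)) y :=
      (hasDerivAt_pow (2*m) y).const_add 1
    have h2 := (h1.inv hpos.ne').const_mul (-(4*(m:ℝ)))
    refine h2.congr_deriv ?_
    push_cast
    field_simp
    rw [show 2*m-1 = 2*m-2+1 by omega, pow_succ]
    ring
  have := intervalIntegral.integral_eq_sub_of_hasDerivAt hderiv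
    (hcont.intervalIntegrable 0 1)
  rw [← integral_Ioc_eq_integral_Ioo, ← intervalIntegral.integral_of_le (by norm_num : (0:ℝ) ≤ 1)]
  rw [this, zero_pow (by omega : 2*m ≠ 0)]
  norm_num
  ring

lemma energy_int (m : ℕ) (hm : 1 ≤ m) (f : ℂ → ℝ)
    (hf : ∀ z, f z = 8*(m:ℝ)^2*‖z‖^(2*m-2)/(1+‖z‖^(2*m))^2) :
    ∫ z in Metric.ball (0:ℂ) 1, f z = 4*Real.pi*m := by
  set F : ℝ → ℝ := fun r => 8*(m:ℝ)^2*r^(2*m-2)/(1+r^(2*m))^2 with hF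
  have h1 : ∫ z in Metric.ball (0:ℂ) 1, f z
      = ∫ z in Metric.ball (0:ℂ) 1, (Iio (1:ℝ)).indicator F ‖z‖ :=
    setIntegral_congr_fun measurableSet_ball (fun z hz => by
      rw [indicator_of_mem (by simpa [mem_ball_zero_iff] using hz : ‖z‖ ∈ Iio (1:ℝ)), hf, hF])
  have h2 : ∫ z in Metric.ball (0:ℂ) 1, (Iio (1:ℝ)).indicator F ‖z‖
      = ∫ z : ℂ, (Iio (1:ℝ)).indicator F ‖z‖ :=
    setIntegral_eq_integral_of_forall_compl_eq_zero (fun z hz =>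
      indicator_of_notMem (by simpa [mem_ball_zero_iff] using hz) _)
  rw [h1, h2, integral_fun_norm_addHaar volume ((Iio (1:ℝ)).indicator F)]
  have h3 : ∫ y in Ioi (0:ℝ),
        y ^ (Module.finrank ℝ ℂ - 1) • (Iio (1:ℝ)).indicator F y
      = ∫ y in Ioo (0:ℝ) 1, y * F y := by
    rw [show (fun y:ℝ => y ^ (Module.finrank ℝ ℂ - 1) • (Iio (1:ℝ)).indicator F y)
        = fun y => (Iio (1:ℝ)).indicator (fun y => y * F y) y from funext fun y => by
          by_cases hy : y ∈ Iio (1:ℝ) <;>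
            simp [hy, finrank_real_complex, indicator_of_mem, indicator_of_notMem]]
    rw [setIntegral_indicator measurableSet_Iio, Ioi_inter_Iio]
  rw [h3, hF] at *
  rw [ftc_piece m hm, finrank_real_complex, measureReal_def, Complex.volume_ball]
  simp [Real.coe_toNNReal', nsmul_eq_mul, smul_eq_mul]
  ring

/-- On the open unit disk, the inverse stereographic lift of `z ↦ zᵐ` (for `m ≥ 1`)
is a unit-vector field, is conformal (`∂₂n = n × ∂₁n`), and
its Dirichlet energy equals `4πm`. -/
theorem conformal_disk_energy (m : ℕ) (hm : 1 ≤ m) :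
    (∀ z ∈ Metric.ball (0 : ℂ) 1, nconf m z ⬝ᵥ nconf m z = 1)
    ∧ (∀ z ∈ Metric.ball (0 : ℂ) 1, pdz2 (nconf m) z = nconf m z ⨯₃ pdz1 (nconf m) z)
    ∧ (∫ z in Metric.ball (0 : ℂ) 1,
        (pdz1 (nconf m) z ⬝ᵥ pdz1 (nconf m) z + pdz2 (nconf m) z ⬝ᵥ pdz2 (nconf m) z))
      = 4 * Real.pi * m := by
  refine ⟨fun z _ => nconf_unit m z, fun z _ => nconf_conformal m z, ?_⟩
  exact energy_int m hm _ (fun z => density m z)
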